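/- For every nonnegative integer m, the alternating sum ∑_{k=0}^{2m} (-1)^k * C(2m+k, k) * C(4m+2-k, 2m+2) equals C(3m+1, m+1). -/

import Mathlib

open PowerSeries Finset

/-- `F a` has coefficients `C(a+n, n)`, i.e. it is `(1-X)^{-(a+1)}`. -/
noncomputable def Faux (a : ℕ) : PowerSeries ℤ :=
  PowerSeries.mk fun n => (Nat.choose (a + n) n : ℤ)

/-- `Haux a` has coefficients `C(a+j,j)` at `n = 2j`, `0` at odd `n`:
it is `(1-X^2)^{-(a+1)}`. -/
noncomputable def Haux (a : ℕ) : PowerSeries ℤ :=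
  PowerSeries.mk fun n => if n % 2 = 0 then (Nat.choose (a + n / 2) (n / 2) : ℤ) else 0

lemma Faux_step (a : ℕ) : (1 - PowerSeries.X) * Faux (a + 1) = Faux a := by
  ext n
  rw [sub_mul, one_mul, map_sub]
  cases n with
  | zero => simp [Faux]
  | succ n =>
    rw [coeff_succ_X_mul]
    simp only [Faux, coeff_mk]
    have h1 : a + 1 + (n + 1) = (a + 1 + n) + 1 := by ring
    rw [h1, Nat.choose_succ_succ (a + 1 + n) n]
    have h2 : a + 1 + n = a + (n + 1) := by ring
    rw [h2]
    push_cast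
    ring

lemma Faux_inv (a : ℕ) : (1 - PowerSeries.X) ^ (a + 1) * Faux a = 1 := by
  induction a with
  | zero =>
    rw [pow_one]
    ext n
    cases n with
    | zero => simp [Faux, sub_mul, one_mul, map_sub]
    | succ n =>
      rw [sub_mul, one_mul, map_sub, coeff_succ_X_mul]
      simp [Faux]
  | succ a ih =>
    have : (1 - PowerSeries.X) ^ (a + 1 + 1) * Faux (a + 1)
        = (1 - PowerSeries.X) ^ (a + 1) * ((1 - PowerSeries.X) * Faux (a + 1)) := by ring
    rw [this, Faux_step, ih]

lemma Haux_step (a : ℕ) : (1 - PowerSeries.X ^ 2) * Haux (a + 1) = Haux a := by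
  ext n
  rw [sub_mul, one_mul, map_sub, coeff_X_pow_mul']
  match n with
  | 0 => simp [Haux]
  | 1 => simp [Haux]
  | (n + 2) =>
    rw [if_pos (by omega)]
    simp only [Haux, coeff_mk]
    have h1 : (n + 2) % 2 = n % 2 := by omega
    have h2 : (n + 2) / 2 = n / 2 + 1 := by omega
    have h3 : n + 2 - 2 = n := by omega
    rw [h1, h2, h3]
    by_cases hp : n % 2 = 0
    · rw [if_pos hp, if_pos hp, if_pos hp]
      have h4 : a + 1 + (n / 2 + 1) = (a + 1 + n / 2) + 1 := by ring
      rw [h4, Nat.choose_succ_succ (a + 1 + n / 2) (n / 2)]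
      have h5 : a + 1 + n / 2 = a + (n / 2 + 1) := by ring
      rw [h5]
      push_cast
      ring
    · rw [if_neg hp, if_neg hp, if_neg hp, sub_zero]

lemma Haux_inv (a : ℕ) : (1 - PowerSeries.X ^ 2) ^ (a + 1) * Haux a = 1 := by
  induction a with
  | zero =>
    rw [pow_one]
    ext n
    rw [sub_mul, one_mul, map_sub, coeff_X_pow_mul']
    match n with
    | 0 => simp [Haux]
    | 1 => simp [Haux]
    | (n + 2) =>
      rw [if_pos (by omega)]
      simp only [Haux, coeff_mk]
      have h1 : (n + 2) % 2 = n % 2 := by omega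
      have h3 : n + 2 - 2 = n := by omega
      rw [h1, h3]
      by_cases hp : n % 2 = 0
      · rw [if_pos hp, if_pos hp]
        simp [coeff_one]
      · rw [if_neg hp, if_neg hp]
        simp [coeff_one]
  | succ a ih =>
    have : (1 - PowerSeries.X ^ 2) ^ (a + 1 + 1) * Haux (a + 1)
        = (1 - PowerSeries.X ^ 2) ^ (a + 1) * ((1 - PowerSeries.X ^ 2) * Haux (a + 1)) := by
      ring
    rw [this, Haux_step, ih]

/-- `Gaux a` has coefficients `(-1)^n C(a+n,n)`, i.e. it is `(1+X)^{-(a+1)}`. -/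
noncomputable def Gaux (a : ℕ) : PowerSeries ℤ := PowerSeries.rescale (-1) (Faux a)

lemma Gaux_coeff (a n : ℕ) :
    (PowerSeries.coeff n) (Gaux a) = (-1 : ℤ) ^ n * (Nat.choose (a + n) n : ℤ) := by
  simp [Gaux, coeff_rescale, Faux]

lemma Gaux_inv (a : ℕ) : (1 + PowerSeries.X) ^ (a + 1) * Gaux a = 1 := by
  have h := congrArg (PowerSeries.rescale (-1 : ℤ)) (Faux_inv a)
  rw [map_mul, map_pow, map_sub, map_one, PowerSeries.rescale_X] at h
  have hx : (1 : PowerSeries ℤ) - PowerSeries.C (-1) * PowerSeries.X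
      = 1 + PowerSeries.X := by
    rw [map_neg, map_one]
    ring
  rw [hx] at h
  simpa [Gaux] using h

lemma key (m : ℕ) : Gaux (2 * m) * Faux (2 * m + 2) = Haux (2 * m) * Faux 1 := by
  set U : PowerSeries ℤ :=
    (1 + PowerSeries.X) ^ (2 * m + 1) * (1 - PowerSeries.X) ^ (2 * m + 3) with hU
  have hA : U * (Gaux (2 * m) * Faux (2 * m + 2)) = 1 := by
    have : U * (Gaux (2 * m) * Faux (2 * m + 2))
        = ((1 + PowerSeries.X) ^ (2 * m + 1) * Gaux (2 * m))
          * ((1 - PowerSeries.X) ^ (2 * m + 2 + 1) * Faux (2 * m + 2)) := by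
      rw [hU]; ring
    rw [this, Gaux_inv, Faux_inv, one_mul]
  have hB : U * (Haux (2 * m) * Faux 1) = 1 := by
    have hsplit : U = (1 - PowerSeries.X ^ 2) ^ (2 * m + 1) * (1 - PowerSeries.X) ^ 2 := by
      rw [hU]
      have : (1 - PowerSeries.X ^ 2 : PowerSeries ℤ)
          = (1 + PowerSeries.X) * (1 - PowerSeries.X) := by ring
      rw [this, mul_pow]
      ring
    have : U * (Haux (2 * m) * Faux 1)
        = ((1 - PowerSeries.X ^ 2) ^ (2 * m + 1) * Haux (2 * m))
          * ((1 - PowerSeries.X) ^ (1 + 1) * Faux 1) := by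
      rw [hsplit]; ring
    rw [this, Haux_inv, Faux_inv, one_mul]
  calc Gaux (2 * m) * Faux (2 * m + 2)
      = Gaux (2 * m) * Faux (2 * m + 2) * (U * (Haux (2 * m) * Faux 1)) := by rw [hB, mul_one]
    _ = (U * (Gaux (2 * m) * Faux (2 * m + 2))) * (Haux (2 * m) * Faux 1) := by ring
    _ = Haux (2 * m) * Faux 1 := by rw [hA, one_mul]

lemma sum_evens (F : ℕ → ℤ) (hF : ∀ s, s % 2 = 1 → F s = 0) (N : ℕ) :
    ∑ s ∈ range (2 * N + 1), F s = ∑ j ∈ range (N + 1), F (2 * j) := by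
  induction N with
  | zero => simp
  | succ N ih =>
    have h1 : 2 * (N + 1) + 1 = (2 * N + 1) + 1 + 1 := by ring
    rw [h1, sum_range_succ, sum_range_succ, ih, hF (2 * N + 1) (by omega), add_zero,
      sum_range_succ]
    have h2 : 2 * N + 1 + 1 = 2 * (N + 1) := by ring
    rw [h2, sum_range_succ, sum_range_succ]

lemma partial_sum (m : ℕ) :
    ∀ J, J ≤ m →
      ((m : ℤ) + 1) * ∑ j ∈ range (J + 1),
          ((2 * (m : ℤ) + 1) - 2 * j) * (Nat.choose (2 * m + j) j : ℤ)
        = (2 * (m : ℤ) + 1) * ((m : ℤ) + 1 - J) * (Nat.choose (2 * m + 1 + J) J : ℤ) := by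
  intro J
  induction J with
  | zero => intro _; simp; ring
  | succ J ih =>
    intro hJ
    have ihs := ih (by omega)
    rw [sum_range_succ, mul_add]
    have hPascal : (Nat.choose (2 * m + 1 + (J + 1)) (J + 1) : ℤ)
        = (Nat.choose (2 * m + 1 + J) J : ℤ) + (Nat.choose (2 * m + 1 + J) (J + 1) : ℤ) := by
      have h1 : 2 * m + 1 + (J + 1) = (2 * m + 1 + J) + 1 := by ring
      rw [h1, Nat.choose_succ_succ (2 * m + 1 + J) J]
      push_cast; ring
    have hC : (Nat.choose (2 * m + 1 + J) (J + 1) : ℤ) * ((J : ℤ) + 1)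
        = (Nat.choose (2 * m + 1 + J) J : ℤ) * (2 * (m : ℤ) + 1) := by
      have := Nat.choose_succ_right_eq (2 * m + 1 + J) J
      have h2 : 2 * m + 1 + J - J = 2 * m + 1 := by omega
      rw [h2] at this
      exact_mod_cast congrArg (fun x : ℕ => (x : ℤ)) this
    have h3 : 2 * m + (J + 1) = 2 * m + 1 + J := by ring
    rw [h3]
    push_cast at ihs hPascal hC ⊢
    linear_combination ihs - ((2 * (m : ℤ) + 1) * ((m : ℤ) - J)) * hPascal - hC

lemma final_sum (m : ℕ) :
    ∑ j ∈ range (m + 1), ((2 * (m : ℤ) + 1) - 2 * j) * (Nat.choose (2 * m + j) j : ℤ)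
      = (Nat.choose (3 * m + 1) (m + 1) : ℤ) := by
  have h := partial_sum m m le_rfl
  have h1 : 2 * m + 1 + m = 3 * m + 1 := by ring
  rw [h1] at h
  have h2 : (Nat.choose (3 * m + 1) (m + 1) : ℤ) * ((m : ℤ) + 1)
      = (Nat.choose (3 * m + 1) m : ℤ) * (2 * (m : ℤ) + 1) := by
    have := Nat.choose_succ_right_eq (3 * m + 1) m
    have h3 : 3 * m + 1 - m = 2 * m + 1 := by omega
    rw [h3] at this
    exact_mod_cast congrArg (fun x : ℕ => (x : ℤ)) this
  have hm : ((m : ℤ) + 1) ≠ 0 := by positivity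
  apply mul_left_cancel₀ hm
  rw [h]
  linear_combination -h2

theorem stmt_1 (m : ℕ) :
    ∑ k ∈ Finset.range (2 * m + 1),
      (-1 : ℤ) ^ k * (Nat.choose (2 * m + k) k) * (Nat.choose (4 * m + 2 - k) (2 * m + 2))
      = Nat.choose (3 * m + 1) (m + 1) := by
  have hL : ∑ k ∈ Finset.range (2 * m + 1),
      (-1 : ℤ) ^ k * (Nat.choose (2 * m + k) k) * (Nat.choose (4 * m + 2 - k) (2 * m + 2))
      = (PowerSeries.coeff (2 * m)) (Gaux (2 * m) * Faux (2 * m + 2)) := by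
    rw [PowerSeries.coeff_mul,
      Finset.Nat.sum_antidiagonal_eq_sum_range_succ
        (fun i j => (PowerSeries.coeff i) (Gaux (2 * m)) * (PowerSeries.coeff j) (Faux (2 * m + 2)))
        (2 * m)]
    apply Finset.sum_congr rfl
    intro k hk
    have hk' : k ≤ 2 * m := by
      simp only [Finset.mem_range] at hk; omega
    rw [Gaux_coeff]
    simp only [Faux, coeff_mk]
    have h1 : 2 * m + 2 + (2 * m - k) = 4 * m + 2 - k := by omega
    rw [h1]
    have h2 : (4 * m + 2 - k).choose (2 * m - k) = (4 * m + 2 - k).choose (2 * m + 2) := by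
      have h3 : 2 * m + 2 ≤ 4 * m + 2 - k := by omega
      have h4 : 4 * m + 2 - k - (2 * m + 2) = 2 * m - k := by omega
      rw [← h4, Nat.choose_symm h3]
    rw [h2]
  rw [hL, key, PowerSeries.coeff_mul,
    Finset.Nat.sum_antidiagonal_eq_sum_range_succ
      (fun i j => (PowerSeries.coeff i) (Haux (2 * m)) * (PowerSeries.coeff j) (Faux 1))
      (2 * m)]
  have hE : ∑ s ∈ range (2 * m + 1),
      (PowerSeries.coeff s) (Haux (2 * m)) * (PowerSeries.coeff (2 * m - s)) (Faux 1)
      = ∑ j ∈ range (m + 1),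
        (PowerSeries.coeff (2 * j)) (Haux (2 * m)) * (PowerSeries.coeff (2 * m - 2 * j)) (Faux 1) := by
    exact sum_evens
      (fun s => (PowerSeries.coeff s) (Haux (2 * m)) * (PowerSeries.coeff (2 * m - s)) (Faux 1))
      (fun s hs => by simp [Haux, hs]) m
  rw [hE, ← final_sum m]
  apply Finset.sum_congr rfl
  intro j hj
  have hj' : j ≤ m := by simp only [Finset.mem_range] at hj; omega
  simp only [Haux, Faux, coeff_mk]
  have h1 : (2 * j) % 2 = 0 := by omega
  have h2 : (2 * j) / 2 = j := by omega
  rw [if_pos h1, h2]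
  have h3 : 1 + (2 * m - 2 * j) = (2 * m - 2 * j) + 1 := by ring
  rw [h3, Nat.choose_succ_self_right]
  have h4 : ((2 * m - 2 * j + 1 : ℕ) : ℤ) = (2 * (m : ℤ) + 1) - 2 * j := by
    have : 2 * j ≤ 2 * m := by omega
    push_cast [Nat.cast_sub this]
    ring
  rw [h4]
  ring
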